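/- Let E be a real inner product space that is complete, let C ⊆ E be a nonempty closed convex set, and let c ∈ (0, 1). Let m be the unique minimum-norm point of C. Then for every x₀ ∈ E the projected iterates x_{n+1} = P_C((1-c)·x_n) satisfy ‖x_n − m‖ ≤ (1-c)ⁿ·‖x₀ − m‖ for all n, and hence converge to m. (Geometric convergence of the projected PGDM gradient steps to the constrained optimum for convex constraint sets, the convergence guarantee asserted in Section 4.1.) -/

import Mathlib

open Metric Filter

lemma proj_char {E : Type*} [NormedAddCommGroup E] [InnerProductSpace ℝ E]
    {C : Set E} (hCcv : Convex ℝ C) {u p : E} (hp : p ∈ C)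
    (h : ∀ y ∈ C, ‖u - p‖ ≤ ‖u - y‖) :
    ∀ w ∈ C, @inner ℝ _ _ (u - p) (w - p) ≤ 0 := by
  haveI : Nonempty C := ⟨⟨p, hp⟩⟩
  have heq : ‖u - p‖ = ⨅ w : C, ‖u - w‖ := by
    refine le_antisymm (le_ciInf fun w => h w w.2) ?_
    exact ciInf_le ⟨0, by rintro r ⟨w, rfl⟩; positivity⟩ (⟨p, hp⟩ : C)
  exact fun w hw => (norm_eq_iInf_iff_real_inner_le_zero hCcv hp).mp heq w hw

/-- Geometric convergence of the projected PGDM gradient steps: if `m` is the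
minimum-norm point of the nonempty closed convex set `C` and the iterates satisfy
`x_{n+1} = P_C((1-c)•x_n)` (i.e., `x_{n+1}` is a nearest point of `C` to
`(1-c)•x_n`), then `‖x_n − m‖ ≤ (1-c)ⁿ·‖x₀ − m‖` for all `n`, and `x_n → m`. -/
theorem stmt14 {E : Type*} [NormedAddCommGroup E] [InnerProductSpace ℝ E] [CompleteSpace E]
    (C : Set E) (hCne : C.Nonempty) (hCcl : IsClosed C) (hCcv : Convex ℝ C)
    (c : ℝ) (hc : c ∈ Set.Ioo (0 : ℝ) 1)
    (m : E) (hmC : m ∈ C) (hm : ∀ y ∈ C, ‖m‖ ≤ ‖y‖)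
    (x₀ : E) (x : ℕ → E) (hx0 : x 0 = x₀)
    (hxC : ∀ n, x (n + 1) ∈ C)
    (hxproj : ∀ n, ∀ y ∈ C, dist ((1 - c) • x n) (x (n + 1)) ≤ dist ((1 - c) • x n) y) :
    (∀ n, ‖x n - m‖ ≤ (1 - c) ^ n * ‖x₀ - m‖) ∧ Tendsto x atTop (nhds m) := by
  obtain ⟨hc0, hc1⟩ := hc
  -- variational characterization of the minimum-norm point
  have hmchar : ∀ w ∈ C, @inner ℝ _ _ ((0 : E) - m) (w - m) ≤ 0 := by
    refine proj_char hCcv hmC fun y hy => ?_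
    simpa [norm_sub_rev] using hm y hy
  -- m is the projection of (1-c)•m
  have hmproj : ∀ w ∈ C, @inner ℝ _ _ ((1 - c) • m - m) (w - m) ≤ 0 := by
    intro w hw
    have h1 : (1 - c) • m - m = c • ((0 : E) - m) := by
      rw [smul_sub, smul_zero]; module
    rw [h1, real_inner_smul_left]
    exact mul_nonpos_of_nonneg_of_nonpos hc0.le (hmchar w hw)
  -- one-step contraction
  have step : ∀ n, ‖x (n + 1) - m‖ ≤ (1 - c) * ‖x n - m‖ := by
    intro n
    set u := (1 - c) • x n with hu
    set p := x (n + 1) with hp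
    have hpchar : ∀ w ∈ C, @inner ℝ _ _ (u - p) (w - p) ≤ 0 := by
      refine proj_char hCcv (hxC n) fun y hy => ?_
      simpa [dist_eq_norm] using hxproj n y hy
    set v := (1 - c) • m with hv
    have h1 : @inner ℝ _ _ (u - p) (m - p) ≤ 0 := hpchar m hmC
    have h2 : @inner ℝ _ _ (v - m) (p - m) ≤ 0 := hmproj p (hxC n)
    have key : ‖p - m‖ ^ 2 ≤ @inner ℝ _ _ (u - v) (p - m) := by
      have hexp : @inner ℝ _ _ (u - v) (p - m)
          = ‖p - m‖ ^ 2 + (- @inner ℝ _ _ (u - p) (m - p)) + (- @inner ℝ _ _ (v - m) (p - m)) := by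
        have : u - v = (p - m) + (u - p) + (-(v - m)) := by abel
        rw [this, inner_add_left, inner_add_left, real_inner_self_eq_norm_sq,
          inner_neg_left]
        have : @inner ℝ _ _ (u - p) (p - m) = - @inner ℝ _ _ (u - p) (m - p) := by
          rw [← inner_neg_right]; congr 1; abel
        rw [this]
      rw [hexp]
      nlinarith
    have huv : ‖u - v‖ = (1 - c) * ‖x n - m‖ := by
      rw [hu, hv, ← smul_sub, norm_smul, Real.norm_eq_abs, abs_of_pos (by linarith)]
    rcases eq_or_lt_of_le (norm_nonneg (p - m)) with h0 | h0
    · rw [← h0]; exact mul_nonneg (by linarith) (norm_nonneg _)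
    · have := le_trans key (real_inner_le_norm (u - v) (p - m))
      have := (mul_le_mul_iff_of_pos_right h0).mp (by nlinarith [this] : ‖p - m‖ * ‖p - m‖ ≤ ‖u - v‖ * ‖p - m‖)
      linarith [huv ▸ this]
  -- geometric bound
  have bound : ∀ n, ‖x n - m‖ ≤ (1 - c) ^ n * ‖x₀ - m‖ := by
    intro n
    induction n with
    | zero => simp [hx0]
    | succ k ih =>
        calc ‖x (k + 1) - m‖ ≤ (1 - c) * ‖x k - m‖ := step k
          _ ≤ (1 - c) * ((1 - c) ^ k * ‖x₀ - m‖) := by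
              exact mul_le_mul_of_nonneg_left ih (by linarith)
          _ = (1 - c) ^ (k + 1) * ‖x₀ - m‖ := by ring
  refine ⟨bound, ?_⟩
  rw [tendsto_iff_norm_sub_tendsto_zero]
  refine squeeze_zero (fun n => norm_nonneg _) bound ?_
  have := (tendsto_pow_atTop_nhds_zero_of_lt_one (by linarith : (0:ℝ) ≤ 1 - c)
    (by linarith)).mul_const ‖x₀ - m‖
  simpa using this
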